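/- Suppose p₀ has support contained in the closed ball of radius R > 0 centered at the origin. Then for every x₀ in the support of p₀, ∫_{ℝ^d} p_t(x_t∣x₀)² / p_t(x_t) dx_t ≤ 2^{d/2} exp(19 ᾱ R² / (2(1−ᾱ))). -/

import Mathlib

open MeasureTheory Real

/-- Forward Gaussian kernel `p_t(x_t | x_0)` with noise level `ᾱ = α`. -/
noncomputable def gaussKer (d : ℕ) (α : ℝ) (x0 xt : EuclideanSpace ℝ (Fin d)) : ℝ :=
  (2 * π * (1 - α)) ^ (-(d : ℝ) / 2) *
    Real.exp (-‖xt - (Real.sqrt α) • x0‖ ^ 2 / (2 * (1 - α)))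

/-- Marginal density `p_t(x_t) = ∫ p_t(x_t|x_0) p_0(x_0) dx_0`. -/
noncomputable def marginal (d : ℕ) (α : ℝ) (p0 : EuclideanSpace ℝ (Fin d) → ℝ)
    (xt : EuclideanSpace ℝ (Fin d)) : ℝ :=
  ∫ x0, gaussKer d α x0 xt * p0 x0

/-- Posterior density `p_t(x_0 | x_t) = p_t(x_t|x_0) p_0(x_0) / p_t(x_t)`. -/
noncomputable def posterior (d : ℕ) (α : ℝ) (p0 : EuclideanSpace ℝ (Fin d) → ℝ)
    (x0 xt : EuclideanSpace ℝ (Fin d)) : ℝ :=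
  gaussKer d α x0 xt * p0 x0 / marginal d α p0 xt

/-- Backward operator `(T_t f)(x_t) = ∫ f(x_0) p_t(x_0|x_t) dx_0`. -/
noncomputable def Tt (d : ℕ) (α : ℝ) (p0 : EuclideanSpace ℝ (Fin d) → ℝ)
    (f : EuclideanSpace ℝ (Fin d) → ℝ) (xt : EuclideanSpace ℝ (Fin d)) : ℝ :=
  ∫ x0, f x0 * posterior d α p0 x0 xt

/-- Forward (adjoint) operator `(T_t⋆ g)(x_0) = ∫ g(x_t) p_t(x_t|x_0) dx_t`. -/
noncomputable def TtStar (d : ℕ) (α : ℝ) (p0 : EuclideanSpace ℝ (Fin d) → ℝ)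
    (g : EuclideanSpace ℝ (Fin d) → ℝ) (x0 : EuclideanSpace ℝ (Fin d)) : ℝ :=
  ∫ xt, g xt * gaussKer d α x0 xt

/-- for `x₀` in the support of `p₀` (contained in the closed ball of
radius `R`), the round-trip ratio integral is uniformly bounded. -/
theorem ratio_integral_bound (d : ℕ) (α : ℝ) (hα : α ∈ Set.Ioo (0:ℝ) 1)
    (p0 : EuclideanSpace ℝ (Fin d) → ℝ) (hp0m : Measurable p0)
    (hp0 : ∀ x, 0 ≤ p0 x) (hp01 : ∫ x, p0 x = 1)
    (R : ℝ) (hR : 0 < R)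
    (hsupp : Function.support p0 ⊆ Metric.closedBall 0 R) :
    ∀ x0 ∈ tsupport p0,
      (∫ xt, gaussKer d α x0 xt ^ 2 / marginal d α p0 xt)
        ≤ (2 : ℝ) ^ ((d : ℝ) / 2) * Real.exp (19 * α * R ^ 2 / (2 * (1 - α))) := by
  
  obtain ⟨hα0, hα1⟩ := hα
  intro x0 hx0
  have hσ : (0:ℝ) < 1 - α := by linarith
  have hπσ : (0:ℝ) < 2 * π * (1 - α) := by positivity
  set C : ℝ := (2 * π * (1 - α)) ^ (-(d : ℝ) / 2) with hCdef
  have hC : 0 < C := Real.rpow_pos_of_pos hπσ _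
  set s : ℝ := Real.sqrt α * R with hsdef
  have hs0 : 0 ≤ s := mul_nonneg (Real.sqrt_nonneg α) hR.le
  have hx0R : ‖x0‖ ≤ R := by
    have hmem : x0 ∈ Metric.closedBall (0 : EuclideanSpace ℝ (Fin d)) R :=
      closure_minimal hsupp Metric.isClosed_closedBall hx0
    simpa using hmem
  have ha : ‖Real.sqrt α • x0‖ ≤ s := by
    rw [norm_smul, Real.norm_eq_abs, abs_of_nonneg (Real.sqrt_nonneg α), hsdef]
    exact mul_le_mul_of_nonneg_left hx0R (Real.sqrt_nonneg α)
  have hker_eq : ∀ y xt : EuclideanSpace ℝ (Fin d),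
      gaussKer d α y xt = C * rexp (-‖xt - Real.sqrt α • y‖ ^ 2 / (2 * (1 - α))) :=
    fun y xt => rfl
  have hker_pos : ∀ y xt : EuclideanSpace ℝ (Fin d), 0 < gaussKer d α y xt := by
    intro y xt; rw [hker_eq]; positivity
  have hker_le : ∀ y xt : EuclideanSpace ℝ (Fin d), gaussKer d α y xt ≤ C := by
    intro y xt
    rw [hker_eq]
    nth_rewrite 2 [← mul_one C]
    exact mul_le_mul_of_nonneg_left
      (Real.exp_le_one_iff.mpr
        (div_nonpos_of_nonpos_of_nonneg (neg_nonpos.mpr (by positivity)) (by positivity))) hC.le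
  have hp0int : Integrable p0 := by
    by_contra h
    rw [integral_undef h] at hp01
    norm_num at hp01
  have hkercont : ∀ xt : EuclideanSpace ℝ (Fin d),
      Continuous (fun y => gaussKer d α y xt) := by
    intro xt
    unfold gaussKer
    fun_prop
  have hmargint : ∀ xt, Integrable (fun y => gaussKer d α y xt * p0 y) := by
    intro xt
    refine Integrable.mono' (hp0int.const_mul C)
      (((hkercont xt).measurable.mul hp0m).aestronglyMeasurable)
      (Filter.Eventually.of_forall fun y => ?_)
    rw [Real.norm_eq_abs, abs_of_nonneg (mul_nonneg (hker_pos _ _).le (hp0 y))]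
    exact mul_le_mul_of_nonneg_right (hker_le y xt) (hp0 y)
  have hmarg_lb : ∀ xt : EuclideanSpace ℝ (Fin d),
      C * rexp (-(‖xt‖ + s) ^ 2 / (2 * (1 - α))) ≤ marginal d α p0 xt := by
    intro xt
    have key : ∀ y, C * rexp (-(‖xt‖ + s) ^ 2 / (2 * (1 - α))) * p0 y
        ≤ gaussKer d α y xt * p0 y := by
      intro y
      rcases eq_or_ne (p0 y) 0 with h0 | h0
      · simp [h0]
      · have hyR : ‖y‖ ≤ R := by
          have := hsupp (Function.mem_support.mpr h0)
          simpa using this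
        have hn : ‖xt - Real.sqrt α • y‖ ≤ ‖xt‖ + s := by
          calc ‖xt - Real.sqrt α • y‖ ≤ ‖xt‖ + ‖Real.sqrt α • y‖ := norm_sub_le _ _
            _ ≤ ‖xt‖ + s := by
                rw [norm_smul, Real.norm_eq_abs, abs_of_nonneg (Real.sqrt_nonneg α)]
                have := mul_le_mul_of_nonneg_left hyR (Real.sqrt_nonneg α)
                rw [hsdef]; linarith
        have hsq : ‖xt - Real.sqrt α • y‖ ^ 2 ≤ (‖xt‖ + s) ^ 2 := by
          nlinarith [norm_nonneg (xt - Real.sqrt α • y)]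
        rw [hker_eq]
        gcongr
        exact hp0 y
    calc C * rexp (-(‖xt‖ + s) ^ 2 / (2 * (1 - α)))
        = ∫ y, C * rexp (-(‖xt‖ + s) ^ 2 / (2 * (1 - α))) * p0 y := by
          rw [integral_const_mul, hp01, mul_one]
      _ ≤ ∫ y, gaussKer d α y xt * p0 y :=
          integral_mono_of_nonneg
            (Filter.Eventually.of_forall fun y =>
              mul_nonneg (by positivity) (hp0 y))
            (hmargint xt) (Filter.Eventually.of_forall key)
      _ = marginal d α p0 xt := rfl
  have hmarg_pos : ∀ xt, 0 < marginal d α p0 xt := fun xt =>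
    lt_of_lt_of_le (by positivity) (hmarg_lb xt)
  set K : ℝ := C * rexp (9 * s ^ 2 / (2 * (1 - α))) with hKdef
  have hpoint : ∀ xt : EuclideanSpace ℝ (Fin d),
      gaussKer d α x0 xt ^ 2 / marginal d α p0 xt
        ≤ K * rexp (-(1 / (4 * (1 - α))) * ‖xt - (4 : ℝ) • (Real.sqrt α • x0)‖ ^ 2) := by
    intro xt
    have h1 : gaussKer d α x0 xt ^ 2 / marginal d α p0 xt
        ≤ gaussKer d α x0 xt ^ 2 / (C * rexp (-(‖xt‖ + s) ^ 2 / (2 * (1 - α)))) := by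
      exact div_le_div_of_nonneg_left (sq_nonneg _) (by positivity) (hmarg_lb xt)
    refine h1.trans ?_
    rw [div_le_iff₀ (by positivity), hker_eq]
    have hAB : -‖xt - Real.sqrt α • x0‖ ^ 2 / (2 * (1 - α))
          + -‖xt - Real.sqrt α • x0‖ ^ 2 / (2 * (1 - α))
        ≤ 9 * s ^ 2 / (2 * (1 - α))
          + -(1 / (4 * (1 - α))) * ‖xt - (4 : ℝ) • (Real.sqrt α • x0)‖ ^ 2
          + -(‖xt‖ + s) ^ 2 / (2 * (1 - α)) := by
      have e1 : ‖xt - Real.sqrt α • x0‖ ^ 2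
          = ‖xt‖ ^ 2 - 2 * inner ℝ xt (Real.sqrt α • x0) + ‖Real.sqrt α • x0‖ ^ 2 :=
        norm_sub_sq_real xt _
      have e4 : ‖xt - (4 : ℝ) • (Real.sqrt α • x0)‖ ^ 2
          = ‖xt‖ ^ 2 - 8 * inner ℝ xt (Real.sqrt α • x0) + 16 * ‖Real.sqrt α • x0‖ ^ 2 := by
        rw [norm_sub_sq_real, real_inner_smul_right, norm_smul]
        rw [Real.norm_eq_abs]
        ring_nf
      have base : -4 * ‖xt - Real.sqrt α • x0‖ ^ 2
          ≤ 18 * s ^ 2 - ‖xt - (4 : ℝ) • (Real.sqrt α • x0)‖ ^ 2 - 2 * (‖xt‖ + s) ^ 2 := by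
        rw [e1, e4]
        nlinarith [sq_nonneg (‖xt‖ - 2 * s), ha, norm_nonneg (Real.sqrt α • x0), hs0,
          norm_nonneg xt]
      have hne : (1:ℝ) - α ≠ 0 := ne_of_gt hσ
      have lhs_eq : -‖xt - Real.sqrt α • x0‖ ^ 2 / (2 * (1 - α))
            + -‖xt - Real.sqrt α • x0‖ ^ 2 / (2 * (1 - α))
          = (-4 * ‖xt - Real.sqrt α • x0‖ ^ 2) / (4 * (1 - α)) := by
        field_simp
        ring
      have rhs_eq : 9 * s ^ 2 / (2 * (1 - α))
            + -(1 / (4 * (1 - α))) * ‖xt - (4 : ℝ) • (Real.sqrt α • x0)‖ ^ 2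
            + -(‖xt‖ + s) ^ 2 / (2 * (1 - α))
          = (18 * s ^ 2 - ‖xt - (4 : ℝ) • (Real.sqrt α • x0)‖ ^ 2
              - 2 * (‖xt‖ + s) ^ 2) / (4 * (1 - α)) := by
        field_simp
        try ring
      rw [lhs_eq, rhs_eq]
      gcongr
      try linarith
    calc (C * rexp (-‖xt - Real.sqrt α • x0‖ ^ 2 / (2 * (1 - α)))) ^ 2
        = C ^ 2 * rexp (-‖xt - Real.sqrt α • x0‖ ^ 2 / (2 * (1 - α))
            + -‖xt - Real.sqrt α • x0‖ ^ 2 / (2 * (1 - α))) := by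
          rw [mul_pow, pow_two (rexp _), ← Real.exp_add]
      _ ≤ C ^ 2 * rexp (9 * s ^ 2 / (2 * (1 - α))
            + -(1 / (4 * (1 - α))) * ‖xt - (4 : ℝ) • (Real.sqrt α • x0)‖ ^ 2
            + -(‖xt‖ + s) ^ 2 / (2 * (1 - α))) := by
          gcongr
      _ = K * rexp (-(1 / (4 * (1 - α))) * ‖xt - (4 : ℝ) • (Real.sqrt α • x0)‖ ^ 2)
            * (C * rexp (-(‖xt‖ + s) ^ 2 / (2 * (1 - α)))) := by
          rw [hKdef, Real.exp_add, Real.exp_add]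
          ring
  -- integrability of the majorant
  have hint0 : Integrable
      (fun v : EuclideanSpace ℝ (Fin d) => rexp (-(1 / (4 * (1 - α))) * ‖v‖ ^ 2)) := by
    have hb : (0:ℝ) < 1 / (4 * (1 - α)) := by positivity
    have hc := (GaussianFourier.integrable_cexp_neg_mul_sq_norm_add
      (V := EuclideanSpace ℝ (Fin d)) (b := ((1 / (4 * (1 - α)) : ℝ) : ℂ))
      (by rw [Complex.ofReal_re]; exact hb) 0 0).norm
    refine hc.congr (Filter.Eventually.of_forall fun v => ?_)
    simp only [Complex.norm_exp]
    congr 1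
    simp only [zero_mul, add_zero]
    norm_cast
  have hint1 : Integrable (fun xt : EuclideanSpace ℝ (Fin d) =>
      rexp (-(1 / (4 * (1 - α))) * ‖xt - (4 : ℝ) • (Real.sqrt α • x0)‖ ^ 2)) := by
    have := (measurePreserving_add_right (volume : Measure (EuclideanSpace ℝ (Fin d)))
      (-((4 : ℝ) • (Real.sqrt α • x0)))).integrable_comp hint0.aestronglyMeasurable
    simpa [Function.comp_def, sub_eq_add_neg] using this.mpr hint0
  have hintmaj : Integrable (fun xt : EuclideanSpace ℝ (Fin d) =>
      K * rexp (-(1 / (4 * (1 - α))) * ‖xt - (4 : ℝ) • (Real.sqrt α • x0)‖ ^ 2)) :=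
    hint1.const_mul K
  have hfinal : (∫ xt, gaussKer d α x0 xt ^ 2 / marginal d α p0 xt)
      ≤ ∫ xt, K * rexp (-(1 / (4 * (1 - α))) * ‖xt - (4 : ℝ) • (Real.sqrt α • x0)‖ ^ 2) :=
    integral_mono_of_nonneg
      (Filter.Eventually.of_forall fun xt =>
        div_nonneg (sq_nonneg _) (hmarg_pos xt).le)
      hintmaj (Filter.Eventually.of_forall hpoint)
  have hval : (∫ xt, K * rexp (-(1 / (4 * (1 - α))) * ‖xt - (4 : ℝ) • (Real.sqrt α • x0)‖ ^ 2))
      = K * (π / (1 / (4 * (1 - α)))) ^ ((d : ℝ) / 2) := by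
    rw [integral_const_mul]
    congr 1
    rw [integral_sub_right_eq_self
      (fun v => rexp (-(1 / (4 * (1 - α))) * ‖v‖ ^ 2)) ((4 : ℝ) • (Real.sqrt α • x0))]
    rw [GaussianFourier.integral_rexp_neg_mul_sq_norm (by positivity)]
    simp
  have hKval : K * (π / (1 / (4 * (1 - α)))) ^ ((d : ℝ) / 2)
      = (2 : ℝ) ^ ((d : ℝ) / 2) * rexp (9 * s ^ 2 / (2 * (1 - α))) := by
    rw [hKdef, hCdef]
    have h4 : π / (1 / (4 * (1 - α))) = 2 * (2 * π * (1 - α)) := by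
      field_simp; ring
    rw [h4, Real.mul_rpow (by norm_num) hπσ.le]
    rw [show -(d : ℝ) / 2 = -((d : ℝ) / 2) by ring, Real.rpow_neg hπσ.le]
    field_simp
  have hexp : rexp (9 * s ^ 2 / (2 * (1 - α))) ≤ rexp (19 * α * R ^ 2 / (2 * (1 - α))) := by
    apply Real.exp_le_exp.mpr
    have hs2 : s ^ 2 = α * R ^ 2 := by
      rw [hsdef, mul_pow, Real.sq_sqrt hα0.le]
    rw [hs2, div_le_div_iff₀ (by positivity) (by positivity)]
    nlinarith [mul_nonneg (mul_nonneg hα0.le (sq_nonneg R)) hσ.le]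
  refine (hfinal.trans (le_of_eq hval)).trans ?_
  rw [hKval]
  exact mul_le_mul_of_nonneg_left hexp (by positivity)
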